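/- Let G be a finite index set, and for each γ ∈ G let m_γ ∈ ℕ, let A_γ : ℂ → ℂ be twice differentiable, and let ℓ_γ : ℝ → ℝ be twice differentiable. Let k : ℝ → ℂ be twice differentiable and suppose that F(t) := Σ_{γ∈G} (−1)^{m_γ} · A_γ(k(t)) · e^{i·k(t)·ℓ_γ(t)} = 0 for all t in a neighborhood of 0. Then, with all quantities evaluated at t = 0 (writing k = k(0), k̇ = k′(0), k̈ = k″(0), ℓ_γ = ℓ_γ(0), ℓ̇_γ = ℓ_γ′(0), ℓ̈_γ = ℓ_γ″(0)), the following identity holds: k̈ · Σ_γ (ℓ_γ·A_γ(k) − i·A_γ′(k))·(−1)^{m_γ}·e^{ikℓ_γ} + 2k̇ · Σ_γ (ik·ℓ_γ·ℓ̇_γ·A_γ(k) + ℓ̇_γ·A_γ(k) + k·ℓ̇_γ·A_γ′(k))·(−1)^{m_γ}·e^{ikℓ_γ} + (k̇)² · Σ_γ (2ℓ_γ·A_γ′(k) − i·A_γ″(k) + i·ℓ_γ²·A_γ(k))·(−1)^{m_γ}·e^{ikℓ_γ} + k · Σ_γ (ℓ̈_γ + ik·(ℓ̇_γ)²)·A_γ(k)·(−1)^{m_γ}·e^{ikℓ_γ}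 = 0. -/

import Mathlib

open Complex

/-- Second-order equation for the second derivative of the resonance pole position with
respect to the perturbation parameter, obtained by differentiating twice the pseudo-orbit
resonance condition `Σ_γ (-1)^{m_γ} A_γ(k(t)) e^{i k(t) ℓ_γ(t)} = 0`. -/
theorem stmt_7 {G : Type*} [Fintype G] (m : G → ℕ) (A : G → ℂ → ℂ) (ℓ : G → ℝ → ℝ)
    (k : ℝ → ℂ)
    (hA : ∀ γ, Differentiable ℂ (A γ)) (hA' : ∀ γ, Differentiable ℂ (deriv (A γ)))
    (hℓ : ∀ γ, Differentiable ℝ (ℓ γ)) (hℓ' : ∀ γ, Differentiable ℝ (deriv (ℓ γ)))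
    (hk : Differentiable ℝ k) (hk' : Differentiable ℝ (deriv k))
    (hF : ∀ᶠ t in nhds (0 : ℝ),
      ∑ γ, (-1 : ℂ) ^ (m γ) * A γ (k t) * Complex.exp (Complex.I * k t * (ℓ γ t)) = 0) :
    deriv (deriv k) 0
        * ∑ γ, ((ℓ γ 0 : ℂ) * A γ (k 0) - Complex.I * deriv (A γ) (k 0))
          * (-1 : ℂ) ^ (m γ) * Complex.exp (Complex.I * k 0 * (ℓ γ 0))
      + 2 * deriv k 0
        * ∑ γ, (Complex.I * k 0 * (ℓ γ 0 : ℂ) * ((deriv (ℓ γ) 0 : ℝ) : ℂ) * A γ (k 0)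
            + ((deriv (ℓ γ) 0 : ℝ) : ℂ) * A γ (k 0)
            + k 0 * ((deriv (ℓ γ) 0 : ℝ) : ℂ) * deriv (A γ) (k 0))
          * (-1 : ℂ) ^ (m γ) * Complex.exp (Complex.I * k 0 * (ℓ γ 0))
      + (deriv k 0) ^ 2
        * ∑ γ, (2 * (ℓ γ 0 : ℂ) * deriv (A γ) (k 0)
            - Complex.I * deriv (deriv (A γ)) (k 0)
            + Complex.I * (ℓ γ 0 : ℂ) ^ 2 * A γ (k 0))
          * (-1 : ℂ) ^ (m γ) * Complex.exp (Complex.I * k 0 * (ℓ γ 0))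
      + k 0
        * ∑ γ, (((deriv (deriv (ℓ γ)) 0 : ℝ) : ℂ)
            + Complex.I * k 0 * ((deriv (ℓ γ) 0 : ℝ) : ℂ) ^ 2) * A γ (k 0)
          * (-1 : ℂ) ^ (m γ) * Complex.exp (Complex.I * k 0 * (ℓ γ 0)) = 0 := by
  classical
  have hK : ∀ t, HasDerivAt k (deriv k t) t := fun t => (hk t).hasDerivAt
  have hK' : ∀ t, HasDerivAt (deriv k) (deriv (deriv k) t) t := fun t => (hk' t).hasDerivAt
  have hL : ∀ γ t, HasDerivAt (fun s : ℝ => ((ℓ γ s : ℝ) : ℂ)) (((deriv (ℓ γ) t : ℝ) : ℂ)) t :=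
    fun γ t => ((hℓ γ t).hasDerivAt).ofReal_comp
  have hL' : ∀ γ t, HasDerivAt (fun s : ℝ => ((deriv (ℓ γ) s : ℝ) : ℂ))
      (((deriv (deriv (ℓ γ)) t : ℝ) : ℂ)) t :=
    fun γ t => ((hℓ' γ t).hasDerivAt).ofReal_comp
  have hAk : ∀ γ t, HasDerivAt (fun s : ℝ => A γ (k s)) (deriv (A γ) (k t) * deriv k t) t :=
    fun γ t => ((hA γ (k t)).hasDerivAt).comp t (hK t)
  have hA'k : ∀ γ t, HasDerivAt (fun s : ℝ => deriv (A γ) (k s))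
      (deriv (deriv (A γ)) (k t) * deriv k t) t :=
    fun γ t => ((hA' γ (k t)).hasDerivAt).comp t (hK t)
  have hExp : ∀ γ t, HasDerivAt (fun s : ℝ => Complex.exp (Complex.I * k s * ((ℓ γ s : ℝ) : ℂ)))
      (Complex.exp (Complex.I * k t * ((ℓ γ t : ℝ) : ℂ)) *
        (Complex.I * deriv k t * ((ℓ γ t : ℝ) : ℂ) + Complex.I * k t * ((deriv (ℓ γ) t : ℝ) : ℂ))) t :=
    fun γ t => (((hK t).const_mul Complex.I).mul (hL γ t)).cexp
  -- first derivative of each summand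
  have hfD : ∀ γ t, HasDerivAt
      (fun s : ℝ => (-1 : ℂ) ^ (m γ) * A γ (k s) * Complex.exp (Complex.I * k s * ((ℓ γ s : ℝ) : ℂ)))
      ((-1 : ℂ) ^ (m γ) *
        (deriv (A γ) (k t) * deriv k t * Complex.exp (Complex.I * k t * ((ℓ γ t : ℝ) : ℂ))
          + A γ (k t) * (Complex.exp (Complex.I * k t * ((ℓ γ t : ℝ) : ℂ)) *
              (Complex.I * deriv k t * ((ℓ γ t : ℝ) : ℂ)
                + Complex.I * k t * ((deriv (ℓ γ) t : ℝ) : ℂ))))) t := by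
    intro γ t
    have h := ((hAk γ t).mul (hExp γ t)).const_mul ((-1 : ℂ) ^ (m γ))
    exact h.congr_of_eventuallyEq (Filter.Eventually.of_forall fun s => by simp only [Pi.mul_apply]; ring)
  have hFd : ∀ t, HasDerivAt
      (fun s : ℝ => ∑ γ, (-1 : ℂ) ^ (m γ) * A γ (k s) *
        Complex.exp (Complex.I * k s * ((ℓ γ s : ℝ) : ℂ)))
      (∑ γ, (-1 : ℂ) ^ (m γ) *
        (deriv (A γ) (k t) * deriv k t * Complex.exp (Complex.I * k t * ((ℓ γ t : ℝ) : ℂ))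
          + A γ (k t) * (Complex.exp (Complex.I * k t * ((ℓ γ t : ℝ) : ℂ)) *
              (Complex.I * deriv k t * ((ℓ γ t : ℝ) : ℂ)
                + Complex.I * k t * ((deriv (ℓ γ) t : ℝ) : ℂ))))) t :=
    fun t => HasDerivAt.fun_sum (fun γ _ => hfD γ t)
  have hFderiv : deriv (fun s : ℝ => ∑ γ, (-1 : ℂ) ^ (m γ) * A γ (k s) *
        Complex.exp (Complex.I * k s * ((ℓ γ s : ℝ) : ℂ)))
      = fun t => ∑ γ, (-1 : ℂ) ^ (m γ) *
        (deriv (A γ) (k t) * deriv k t * Complex.exp (Complex.I * k t * ((ℓ γ t : ℝ) : ℂ))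
          + A γ (k t) * (Complex.exp (Complex.I * k t * ((ℓ γ t : ℝ) : ℂ)) *
              (Complex.I * deriv k t * ((ℓ γ t : ℝ) : ℂ)
                + Complex.I * k t * ((deriv (ℓ γ) t : ℝ) : ℂ)))) :=
    funext fun t => (hFd t).deriv
  -- second derivative of each summand, at 0
  have hE : ∀ γ, HasDerivAt
      (fun t : ℝ => (-1 : ℂ) ^ (m γ) *
        (deriv (A γ) (k t) * deriv k t * Complex.exp (Complex.I * k t * ((ℓ γ t : ℝ) : ℂ))
          + A γ (k t) * (Complex.exp (Complex.I * k t * ((ℓ γ t : ℝ) : ℂ)) *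
              (Complex.I * deriv k t * ((ℓ γ t : ℝ) : ℂ)
                + Complex.I * k t * ((deriv (ℓ γ) t : ℝ) : ℂ)))))
      ((-1 : ℂ) ^ (m γ) * Complex.exp (Complex.I * k 0 * ((ℓ γ 0 : ℝ) : ℂ)) *
        (deriv (deriv (A γ)) (k 0) * deriv k 0 ^ 2
          + deriv (A γ) (k 0) * deriv (deriv k) 0
          + 2 * Complex.I * deriv (A γ) (k 0) * deriv k 0 *
              (deriv k 0 * ((ℓ γ 0 : ℝ) : ℂ) + k 0 * ((deriv (ℓ γ) 0 : ℝ) : ℂ))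
          + Complex.I * A γ (k 0) * (deriv (deriv k) 0 * ((ℓ γ 0 : ℝ) : ℂ)
              + 2 * deriv k 0 * ((deriv (ℓ γ) 0 : ℝ) : ℂ)
              + k 0 * ((deriv (deriv (ℓ γ)) 0 : ℝ) : ℂ))
          - A γ (k 0) * (deriv k 0 * ((ℓ γ 0 : ℝ) : ℂ) + k 0 * ((deriv (ℓ γ) 0 : ℝ) : ℂ)) ^ 2)) 0 := by
    intro γ
    have hterm1 := ((hA'k γ 0).fun_mul (hK' 0)).fun_mul (hExp γ 0)
    have hinner2 := (((hK' 0).const_mul Complex.I).fun_mul (hL γ 0)).fun_add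
      (((hK 0).const_mul Complex.I).fun_mul (hL' γ 0))
    have hterm2 := (hAk γ 0).fun_mul ((hExp γ 0).fun_mul hinner2)
    have h := (hterm1.fun_add hterm2).const_mul ((-1 : ℂ) ^ (m γ))
    convert h using 1
    · rfl
    ring_nf
    simp only [Complex.I_sq]
    ring
  have hG := HasDerivAt.fun_sum (u := Finset.univ) (fun γ (_ : γ ∈ Finset.univ) => hE γ)
  -- second derivative of F at 0 vanishes
  have hz : deriv (deriv (fun s : ℝ => ∑ γ, (-1 : ℂ) ^ (m γ) * A γ (k s) *
      Complex.exp (Complex.I * k s * ((ℓ γ s : ℝ) : ℂ)))) 0 = 0 := by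
    have h0 : (fun s : ℝ => ∑ γ, (-1 : ℂ) ^ (m γ) * A γ (k s) *
        Complex.exp (Complex.I * k s * ((ℓ γ s : ℝ) : ℂ))) =ᶠ[nhds (0 : ℝ)]
        (fun _ => (0 : ℂ)) := hF
    have h1 := h0.deriv
    have h2 := h1.deriv
    have := h2.self_of_nhds
    simpa using this
  have key : (∑ γ, (-1 : ℂ) ^ (m γ) * Complex.exp (Complex.I * k 0 * ((ℓ γ 0 : ℝ) : ℂ)) *
        (deriv (deriv (A γ)) (k 0) * deriv k 0 ^ 2
          + deriv (A γ) (k 0) * deriv (deriv k) 0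
          + 2 * Complex.I * deriv (A γ) (k 0) * deriv k 0 *
              (deriv k 0 * ((ℓ γ 0 : ℝ) : ℂ) + k 0 * ((deriv (ℓ γ) 0 : ℝ) : ℂ))
          + Complex.I * A γ (k 0) * (deriv (deriv k) 0 * ((ℓ γ 0 : ℝ) : ℂ)
              + 2 * deriv k 0 * ((deriv (ℓ γ) 0 : ℝ) : ℂ)
              + k 0 * ((deriv (deriv (ℓ γ)) 0 : ℝ) : ℂ))
          - A γ (k 0) * (deriv k 0 * ((ℓ γ 0 : ℝ) : ℂ) + k 0 * ((deriv (ℓ γ) 0 : ℝ) : ℂ)) ^ 2)) = 0 := by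
    rw [hFderiv] at hz
    rw [← hG.deriv]
    exact hz
  -- combine the four sums and conclude
  rw [Finset.mul_sum, Finset.mul_sum, Finset.mul_sum, Finset.mul_sum,
    ← Finset.sum_add_distrib, ← Finset.sum_add_distrib, ← Finset.sum_add_distrib]
  have := congrArg (fun z => -Complex.I * z) key
  simp only [mul_zero] at this
  rw [Finset.mul_sum] at this
  rw [← this]
  refine Finset.sum_congr rfl fun γ _ => ?_
  ring_nf
  simp only [Complex.I_sq]
  ring
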